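/- Key exchange identity in the random walk proof: Let 1/2 ≤ p₁ < p₂ < 1 with qᵢ = 1 − pᵢ, set r = √(p₂q₂/(p₁q₁)) ∈ (0,1), fix a positive integer k and let σ = inf{n : S_n = ±k} be the exit time from (−k,k). Then for every n ∈ ℕ, ℚ_{p₂}(σ > n) = ( 𝔼_{p₁}[ r^σ · 1_{σ > n} ] / 𝔼_{p₁}[ r^σ ] ), i.e. ℚ_{p₂}(σ > n) = ( 𝔼_{p₁}[ r^σ | σ > n ] / 𝔼_{p₁}[ r^σ ] ) · ℚ_{p₁}(σ > n), where 𝔼_{p₁} denotes expectation under the law of the biased walk with up-step probability p₁. -/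

import Mathlib

open MeasureTheory ProbabilityTheory
set_option linter.unusedSectionVars false

/-- The partial-sum (random walk) process associated to a step process `X`. -/
noncomputable def walk {Ω : Type*} (X : ℕ → Ω → ℤ) (n : ℕ) (ω : Ω) : ℤ :=
  ∑ j ∈ Finset.range n, X j ω

/-- The natural filtration `ℱ_n = σ(X_1, …, X_n)` of the steps. -/
def rwFilt {Ω : Type*} (X : ℕ → Ω → ℤ) (n : ℕ) : MeasurableSpace Ω :=
  ⨆ j ∈ Finset.range n, MeasurableSpace.comap (X j) inferInstance

/-- `X` is a sequence of i.i.d. `±1`-valued steps with `P(X_i = 1) = p` and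
`P(X_i = -1) = 1 - p`. -/
def IsBiasedWalkSteps {Ω : Type*} [MeasurableSpace Ω] (P : Measure Ω)
    (X : ℕ → Ω → ℤ) (p : ℝ) : Prop :=
  (∀ i, Measurable (X i)) ∧
  iIndepFun X P ∧
  (∀ i, P {ω | X i ω = 1} = ENNReal.ofReal p) ∧
  (∀ i, P {ω | X i ω = -1} = ENNReal.ofReal (1 - p))

/-- The exit time `σ = inf {n : S_n = ±k}` of the walk from `(-k, k)`, valued in `ℕ∞`
(with `inf ∅ = ⊤`). -/
noncomputable def exitTime {Ω : Type*} (X : ℕ → Ω → ℤ) (k : ℕ) (ω : Ω) : ℕ∞ :=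
  sInf {t : ℕ∞ | ∃ m : ℕ, t = (m : ℕ∞) ∧ (walk X m ω = (k : ℤ) ∨ walk X m ω = -(k : ℤ))}


namespace RWKey

/-- step value of a boolean -/
def stp (b : Bool) : ℤ := if b then 1 else -1

/-- deterministic walk -/
def bw (s : ℕ → Bool) (i : ℕ) : ℤ := ∑ j ∈ Finset.range i, stp (s j)

/-- weight of a path prefix -/
noncomputable def wt (p : ℝ) (m : ℕ) (s : ℕ → Bool) : ℝ :=
  ∏ j ∈ Finset.range m, (if s j then p else 1 - p)

def hits (k : ℕ) (s : ℕ → Bool) (i : ℕ) : Prop := bw s i = (k : ℤ) ∨ bw s i = -(k : ℤ)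

def inside (k m : ℕ) (s : ℕ → Bool) : Prop := ∀ i ≤ m, ¬ hits k s i

def exitsAt (k m : ℕ) (s : ℕ → Bool) : Prop := (∀ i < m, ¬ hits k s i) ∧ hits k s m

/-- extend a finite path by `false`s -/
def ex (m : ℕ) (s : Fin m → Bool) : ℕ → Bool := fun j => if h : j < m then s ⟨j, h⟩ else false

lemma bw_congr {s t : ℕ → Bool} {m : ℕ} (h : ∀ j < m, s j = t j) {i : ℕ} (hi : i ≤ m) :
    bw s i = bw t i := by
  unfold bw
  exact Finset.sum_congr rfl fun j hj => by
    rw [h j (lt_of_lt_of_le (Finset.mem_range.mp hj) hi)]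

lemma wt_congr {p : ℝ} {s t : ℕ → Bool} {m : ℕ} (h : ∀ j < m, s j = t j) :
    wt p m s = wt p m t := by
  unfold wt
  exact Finset.prod_congr rfl fun j hj => by rw [h j (Finset.mem_range.mp hj)]

lemma hits_congr {k : ℕ} {s t : ℕ → Bool} {m : ℕ} (h : ∀ j < m, s j = t j) {i : ℕ}
    (hi : i ≤ m) : hits k s i ↔ hits k t i := by
  unfold hits; rw [bw_congr h hi]

lemma inside_congr {k m : ℕ} {s t : ℕ → Bool} (h : ∀ j < m, s j = t j) :
    inside k m s ↔ inside k m t := by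
  unfold inside
  exact forall₂_congr fun i hi => not_congr (hits_congr h hi)

lemma exitsAt_congr {k m : ℕ} {s t : ℕ → Bool} (h : ∀ j < m, s j = t j) :
    exitsAt k m s ↔ exitsAt k m t := by
  unfold exitsAt
  exact and_congr (forall₂_congr fun i hi => not_congr (hits_congr h (le_of_lt hi)))
    (hits_congr h le_rfl)

/-- number of up-steps in the first `m` steps -/
noncomputable def ups (m : ℕ) (s : ℕ → Bool) : ℕ :=
  ((Finset.range m).filter (fun j => s j = true)).card

lemma wt_eq_pow (p : ℝ) (m : ℕ) (s : ℕ → Bool) :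
    wt p m s = p ^ ups m s * (1 - p) ^ (m - ups m s) := by
  classical
  unfold wt ups
  rw [← Finset.prod_filter_mul_prod_filter_not (Finset.range m) (fun j => s j = true)]
  have hc := Finset.card_filter_add_card_filter_not (s := Finset.range m)
    (p := fun j => s j = true)
  beta_reduce at hc
  rw [Finset.card_range] at hc
  have h1 : ∀ j ∈ (Finset.range m).filter (fun j => s j = true),
      (if s j = true then p else 1 - p) = p := by
    intro j hj; simp only [Finset.mem_filter] at hj; simp [hj.2]
  have h2 : ∀ j ∈ (Finset.range m).filter (fun j => ¬ s j = true),
      (if s j = true then p else 1 - p) = 1 - p := by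
    intro j hj; simp only [Finset.mem_filter] at hj; simp [hj.2]
  have hcc : ((Finset.range m).filter (fun j => ¬ s j = true)).card
      = m - ((Finset.range m).filter (fun j => s j = true)).card := by omega
  rw [Finset.prod_eq_pow_card h1, Finset.prod_eq_pow_card h2, hcc]

lemma bw_eq_ups (m : ℕ) (s : ℕ → Bool) :
    bw s m = (ups m s : ℤ) - ((m : ℤ) - (ups m s : ℤ)) := by
  classical
  unfold bw ups
  rw [← Finset.sum_filter_add_sum_filter_not (Finset.range m) (fun j => s j = true)]
  have h1 : ∑ j ∈ (Finset.range m).filter (fun j => s j = true), stp (s j)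
      = ((((Finset.range m).filter (fun j => s j = true)).card : ℤ)) := by
    rw [Finset.sum_congr rfl (fun j hj => ?_), Finset.sum_const, nsmul_eq_mul, mul_one]
    simp only [Finset.mem_filter] at hj
    simp [stp, hj.2]
  have h2 : ∑ j ∈ (Finset.range m).filter (fun j => ¬ s j = true), stp (s j)
      = -((((Finset.range m).filter (fun j => ¬ s j = true)).card : ℤ)) := by
    rw [Finset.sum_congr rfl (fun j hj => ?_), Finset.sum_const, nsmul_eq_mul, mul_neg_one]
    simp only [Finset.mem_filter] at hj
    simp [stp, hj.2]
  rw [h1, h2]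
  have := Finset.card_filter_add_card_filter_not (s := Finset.range m)
    (p := fun j => s j = true)
  beta_reduce at this
  rw [Finset.card_range] at this
  omega

lemma ups_le (m : ℕ) (s : ℕ → Bool) : ups m s ≤ m := by
  unfold ups
  exact le_trans (Finset.card_filter_le _ _) (by simp)

lemma wt_nonneg {p : ℝ} (h0 : 0 ≤ p) (h1 : p ≤ 1) (m : ℕ) (s : ℕ → Bool) :
    0 ≤ wt p m s :=
  Finset.prod_nonneg fun j _ => by cases hs : s j <;> simp [hs] <;> linarith

/-- flip of a finite path -/
def flp (m : ℕ) (s : Fin m → Bool) : Fin m → Bool := fun i => ! s i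

lemma ex_flp {m : ℕ} (s : Fin m → Bool) {j : ℕ} (hj : j < m) :
    ex m (flp m s) j = ! (ex m s j) := by
  unfold ex flp
  rw [dif_pos hj, dif_pos hj]

lemma bw_flp {m : ℕ} (s : Fin m → Bool) {i : ℕ} (hi : i ≤ m) :
    bw (ex m (flp m s)) i = - bw (ex m s) i := by
  unfold bw
  rw [← Finset.sum_neg_distrib]
  refine Finset.sum_congr rfl fun j hj => ?_
  rw [ex_flp s (lt_of_lt_of_le (Finset.mem_range.mp hj) hi)]
  cases ex m s j <;> simp [stp]

lemma hits_flp {k m : ℕ} (s : Fin m → Bool) {i : ℕ} (hi : i ≤ m) :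
    hits k (ex m (flp m s)) i ↔ hits k (ex m s) i := by
  unfold hits
  rw [bw_flp s hi]
  constructor <;> rintro (h | h) <;> omega

lemma exitsAt_flp {k m : ℕ} (s : Fin m → Bool) :
    exitsAt k m (ex m (flp m s)) ↔ exitsAt k m (ex m s) := by
  unfold exitsAt
  exact and_congr (forall₂_congr fun i hi => not_congr (hits_flp s hi.le))
    (hits_flp s le_rfl)

lemma flp_flp (m : ℕ) (s : Fin m → Bool) : flp m (flp m s) = s := by
  funext i; simp [flp]

lemma ups_flp (m : ℕ) (s : Fin m → Bool) :
    ups m (ex m (flp m s)) = m - ups m (ex m s) := by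
  classical
  unfold ups
  have h1 : (Finset.range m).filter (fun j => ex m (flp m s) j = true)
      = (Finset.range m).filter (fun j => ¬ ex m s j = true) := by
    apply Finset.filter_congr
    intro j hj
    rw [ex_flp s (Finset.mem_range.mp hj)]
    cases ex m s j <;> simp
  rw [h1]
  have hc := Finset.card_filter_add_card_filter_not (s := Finset.range m)
    (p := fun j => ex m s j = true)
  beta_reduce at hc
  rw [Finset.card_range] at hc
  omega

section exchange

variable {p₁ p₂ : ℝ} (k : ℕ)

/-- the sqrt ratio -/
noncomputable def rr (p₁ p₂ : ℝ) : ℝ := Real.sqrt ((p₂ * (1 - p₂)) / (p₁ * (1 - p₁)))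

/-- the exchange constant -/
noncomputable def CC (p₁ p₂ : ℝ) (k : ℕ) : ℝ :=
  (p₂ ^ k + (1 - p₂) ^ k) / ((p₁ ^ k + (1 - p₁) ^ k) * rr p₁ p₂ ^ k)

lemma rr_pos (h₁ : 0 < p₁) (h₁' : p₁ < 1) (h₂ : 0 < p₂) (h₂' : p₂ < 1) :
    0 < rr p₁ p₂ :=
  Real.sqrt_pos.mpr (div_pos (mul_pos h₂ (by linarith)) (mul_pos h₁ (by linarith)))

lemma rr_sq (h₁ : 0 < p₁) (h₁' : p₁ < 1) (h₂ : 0 < p₂) (h₂' : p₂ < 1) :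
    rr p₁ p₂ ^ 2 = (p₂ * (1 - p₂)) / (p₁ * (1 - p₁)) :=
  Real.sq_sqrt (le_of_lt (div_pos (mul_pos h₂ (by linarith)) (mul_pos h₁ (by linarith))))

lemma pair_identity (h₁ : 0 < p₁) (h₁' : p₁ < 1) (h₂ : 0 < p₂) (h₂' : p₂ < 1)
    (d m : ℕ) (hm : m = 2 * d + k) :
    p₂ ^ (d + k) * (1 - p₂) ^ d + p₂ ^ d * (1 - p₂) ^ (d + k)
      = CC p₁ p₂ k * (rr p₁ p₂ ^ m *
        (p₁ ^ (d + k) * (1 - p₁) ^ d + p₁ ^ d * (1 - p₁) ^ (d + k))) := by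
  have hq1 : (0:ℝ) < 1 - p₁ := by linarith
  have hq2 : (0:ℝ) < 1 - p₂ := by linarith
  have hr := rr_pos (p₁ := p₁) (p₂ := p₂) h₁ h₁' h₂ h₂'
  have hrs := rr_sq (p₁ := p₁) (p₂ := p₂) h₁ h₁' h₂ h₂'
  have hrm : rr p₁ p₂ ^ m = (p₂ ^ d * (1 - p₂) ^ d) / (p₁ ^ d * (1 - p₁) ^ d)
      * rr p₁ p₂ ^ k := by
    rw [hm, pow_add, pow_mul, hrs, div_pow, mul_pow, mul_pow]
  rw [hrm]
  unfold CC
  have hden : (p₁ ^ k + (1 - p₁) ^ k) > 0 := by positivity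
  have hrk : rr p₁ p₂ ^ k > 0 := by positivity
  field_simp
  ring

end exchange

open Classical in
/-- total weight of paths that stay strictly inside up to time `n` -/
noncomputable def Treal (p : ℝ) (k n : ℕ) : ℝ :=
  ∑ s : Fin n → Bool, if inside k n (ex n s) then wt p n (ex n s) else 0

open Classical in
/-- total weight of paths that exit exactly at time `m` -/
noncomputable def Ereal (p : ℝ) (k m : ℕ) : ℝ :=
  ∑ s : Fin m → Bool, if exitsAt k m (ex m s) then wt p m (ex m s) else 0

lemma Ereal_exchange {p₁ p₂ : ℝ} (h₁ : 0 < p₁) (h₁' : p₁ < 1) (h₂ : 0 < p₂) (h₂' : p₂ < 1)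
    (k : ℕ) (hk : 0 < k) (m : ℕ) :
    Ereal p₂ k m = CC p₁ p₂ k * (rr p₁ p₂ ^ m * Ereal p₁ k m) := by
  classical
  have key : ∀ p : ℝ, 0 < p → p < 1 → Ereal p k m =
      ∑ s ∈ Finset.univ.filter
          (fun s : Fin m → Bool => exitsAt k m (ex m s) ∧ bw (ex m s) m = (k:ℤ)),
        (wt p m (ex m s) + wt p m (ex m (flp m s))) := by
    intro p hp hp'
    unfold Ereal
    rw [← Finset.sum_filter]
    have hsplit : Finset.univ.filter (fun s : Fin m → Bool => exitsAt k m (ex m s))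
        = (Finset.univ.filter
            (fun s : Fin m → Bool => exitsAt k m (ex m s) ∧ bw (ex m s) m = (k:ℤ)))
          ∪ (Finset.univ.filter
            (fun s : Fin m → Bool => exitsAt k m (ex m s) ∧ bw (ex m s) m = -(k:ℤ))) := by
      ext s
      simp only [Finset.mem_filter, Finset.mem_union, Finset.mem_univ, true_and]
      constructor
      · intro h
        rcases h.2 with h' | h'
        · exact Or.inl ⟨h, h'⟩
        · exact Or.inr ⟨h, h'⟩
      · rintro (⟨h, _⟩ | ⟨h, _⟩) <;> exact h
    have hdisj : Disjoint
        (Finset.univ.filter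
          (fun s : Fin m → Bool => exitsAt k m (ex m s) ∧ bw (ex m s) m = (k:ℤ)))
        (Finset.univ.filter
          (fun s : Fin m → Bool => exitsAt k m (ex m s) ∧ bw (ex m s) m = -(k:ℤ))) := by
      rw [Finset.disjoint_left]
      intro s hs1 hs2
      simp only [Finset.mem_filter, Finset.mem_univ, true_and] at hs1 hs2
      have := hs1.2
      rw [hs2.2] at this
      omega
    rw [hsplit, Finset.sum_union hdisj, Finset.sum_add_distrib]
    congr 1
    refine Finset.sum_nbij' (fun s => flp m s) (fun s => flp m s) ?_ ?_ ?_ ?_ ?_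
    · intro s hs
      simp only [Finset.mem_filter, Finset.mem_univ, true_and] at hs ⊢
      refine ⟨(exitsAt_flp s).mpr hs.1, ?_⟩
      rw [bw_flp s le_rfl, hs.2, neg_neg]
    · intro s hs
      simp only [Finset.mem_filter, Finset.mem_univ, true_and] at hs ⊢
      refine ⟨(exitsAt_flp s).mpr hs.1, ?_⟩
      rw [bw_flp s le_rfl, hs.2]
    · intro s _; exact flp_flp m s
    · intro s _; exact flp_flp m s
    · intro s _; rw [flp_flp m s]
  rw [key p₂ h₂ h₂', key p₁ h₁ h₁', Finset.mul_sum, Finset.mul_sum]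
  refine Finset.sum_congr rfl fun s hs => ?_
  simp only [Finset.mem_filter, Finset.mem_univ, true_and] at hs
  -- compute the exponents
  have hbw := bw_eq_ups m (ex m s)
  have hul := ups_le m (ex m s)
  rw [hs.2] at hbw
  set u := ups m (ex m s) with hu
  obtain ⟨d, hd1, hd2, hd3⟩ : ∃ d, u = d + k ∧ m - u = d ∧ m = 2 * d + k :=
    ⟨m - u, by omega, rfl, by omega⟩
  have hflipups : ups m (ex m (flp m s)) = m - u := ups_flp m s
  have hd4 : m - d = d + k := by omega
  rw [wt_eq_pow p₂ m (ex m s), wt_eq_pow p₂ m (ex m (flp m s)),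
    wt_eq_pow p₁ m (ex m s), wt_eq_pow p₁ m (ex m (flp m s)), hflipups, ← hu,
    hd2, hd4, hd1]
  exact pair_identity k h₁ h₁' h₂ h₂' d m hd3

/-- glue two finite paths -/
def glue (m c : ℕ) (a : Fin m → Bool) (b : Fin c → Bool) : Fin (m + c) → Bool :=
  fun j => if h : (j : ℕ) < m then a ⟨j, h⟩ else b ⟨(j : ℕ) - m, by
    have := j.isLt; omega⟩

lemma glue_bijective (m c : ℕ) :
    Function.Bijective (fun ab : (Fin m → Bool) × (Fin c → Bool) =>
      glue m c ab.1 ab.2) := by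
  rw [Function.bijective_iff_has_inverse]
  refine ⟨fun t => (fun i => t ⟨i, by omega⟩, fun i => t ⟨m + i, by omega⟩), ?_, ?_⟩
  · rintro ⟨a, b⟩
    dsimp only
    refine Prod.ext ?_ ?_
    · funext i
      simp only [glue]
      rw [dif_pos i.isLt]
    · funext i
      simp only [glue]
      rw [dif_neg (by omega)]
      congr 1
      ext
      simp
  · intro t
    funext j
    simp only [glue]
    split
    · congr 1
    · congr 1
      ext
      simp only
      have := j.isLt
      omega

lemma ex_glue_lt {m c : ℕ} (a : Fin m → Bool) (b : Fin c → Bool) {j : ℕ} (hj : j < m) :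
    ex (m + c) (glue m c a b) j = ex m a j := by
  unfold ex glue
  rw [dif_pos (by omega : j < m + c), dif_pos hj]
  simp only
  rw [dif_pos hj]

lemma ex_glue_ge {m c : ℕ} (a : Fin m → Bool) (b : Fin c → Bool) {i : ℕ} (hi : i < c) :
    ex (m + c) (glue m c a b) (m + i) = ex c b i := by
  unfold ex glue
  rw [dif_pos (by omega : m + i < m + c), dif_pos hi]
  simp only
  rw [dif_neg (by omega : ¬ m + i < m)]
  congr 1
  ext
  simp

lemma wt_glue (p : ℝ) (m c : ℕ) (a : Fin m → Bool) (b : Fin c → Bool) :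
    wt p (m + c) (ex (m + c) (glue m c a b)) = wt p m (ex m a) * wt p c (ex c b) := by
  unfold wt
  rw [Finset.prod_range_add]
  congr 1
  · exact Finset.prod_congr rfl fun j hj => by
      rw [ex_glue_lt a b (Finset.mem_range.mp hj)]
  · exact Finset.prod_congr rfl fun i hi => by
      rw [ex_glue_ge a b (Finset.mem_range.mp hi)]

lemma inside_glue_prefix {k m c : ℕ} {a : Fin m → Bool} {b : Fin c → Bool}
    (h : inside k (m + c) (ex (m + c) (glue m c a b))) : inside k m (ex m a) := by
  intro i hi
  rw [← hits_congr (fun j hj => ex_glue_lt a b hj) hi]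
  exact h i (by omega)

lemma inside_bound {k m : ℕ} {s : ℕ → Bool} (hk : 0 < k) (h : inside k m s) :
    ∀ i ≤ m, -(k : ℤ) < bw s i ∧ bw s i < (k : ℤ) := by
  intro i hi
  induction i with
  | zero =>
    have : bw s 0 = 0 := by simp [bw]
    rw [this]
    constructor <;> omega
  | succ i ih =>
    have hb := ih (by omega)
    have hstep : bw s (i + 1) = bw s i + stp (s i) := Finset.sum_range_succ _ _
    have hs : stp (s i) = 1 ∨ stp (s i) = -1 := by cases s i <;> simp [stp]
    have hnh := h (i + 1) hi
    unfold hits at hnh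
    push_neg at hnh
    omega

lemma bw_all_true {s : ℕ → Bool} {m c : ℕ} (h : ∀ i < c, s (m + i) = true) :
    ∀ i ≤ c, bw s (m + i) = bw s m + (i : ℤ) := by
  intro i hi
  induction i with
  | zero => simp
  | succ i ih =>
    have : bw s (m + (i + 1)) = bw s (m + i) + stp (s (m + i)) := by
      rw [← Nat.add_assoc]
      exact Finset.sum_range_succ _ _
    rw [this, ih (by omega), h i (by omega)]
    simp [stp]
    ring

lemma glue_not_all_true {k m : ℕ} (hk : 0 < k) {a : Fin m → Bool} {b : Fin (2 * k) → Bool}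
    (h : inside k (m + 2 * k) (ex (m + 2 * k) (glue m (2 * k) a b))) :
    ¬ ∀ i, b i = true := by
  intro hb
  set s := ex (m + 2 * k) (glue m (2 * k) a b) with hsdef
  have hall : ∀ i < 2 * k, s (m + i) = true := by
    intro i hi
    rw [hsdef, ex_glue_ge a b hi]
    unfold ex
    rw [dif_pos hi]
    exact hb _
  have hbd := inside_bound hk h m (by omega)
  set v := bw s m with hv
  have hc : ∃ c : ℕ, (c : ℤ) = (k : ℤ) - v ∧ c ≤ 2 * k := by
    refine ⟨((k : ℤ) - v).toNat, Int.toNat_of_nonneg (by omega), ?_⟩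
    omega
  obtain ⟨c, hc1, hc2⟩ := hc
  have := bw_all_true hall c hc2
  have hhit : hits k s (m + c) := by
    unfold hits
    left
    omega
  exact h (m + c) (by omega) hhit

open Classical in
lemma sum_wt_ex_one {p : ℝ} (c : ℕ) :
    ∑ b : Fin c → Bool, wt p c (ex c b) = 1 := by
  induction c with
  | zero =>
    rw [Fintype.sum_unique]
    simp [wt]
  | succ c ih =>
    rw [← Fintype.sum_bijective _ (glue_bijective c 1) _
      (fun t => wt p (c + 1) (ex (c + 1) t)) (fun _ => rfl), Fintype.sum_prod_type]
    dsimp only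
    have : ∀ (a : Fin c → Bool) (b : Fin 1 → Bool),
        wt p (c + 1) (ex (c + 1) (glue c 1 a b)) = wt p c (ex c a) * wt p 1 (ex 1 b) :=
      fun a b => wt_glue p c 1 a b
    calc ∑ a : Fin c → Bool, ∑ b : Fin 1 → Bool,
          wt p (c + 1) (ex (c + 1) (glue c 1 a b))
        = ∑ a : Fin c → Bool, ∑ b : Fin 1 → Bool, wt p c (ex c a) * wt p 1 (ex 1 b) := by
          exact Finset.sum_congr rfl fun a _ => Finset.sum_congr rfl fun b _ => this a b
      _ = (∑ a : Fin c → Bool, wt p c (ex c a)) * (∑ b : Fin 1 → Bool, wt p 1 (ex 1 b)) := by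
          rw [← Finset.sum_mul_sum]
      _ = 1 := by
          rw [ih, one_mul]
          rw [Fintype.sum_equiv (Equiv.funUnique (Fin 1) Bool)
            (fun b : Fin 1 → Bool => wt p 1 (ex 1 b))
            (fun x : Bool => if x then p else 1 - p)
            (fun b => by simp [wt, ex, Finset.prod_range_one, Equiv.funUnique])]
          rw [Fintype.sum_bool]
          simp

lemma wt_all_true (p : ℝ) (c : ℕ) : wt p c (ex c (fun _ => true)) = p ^ c := by
  unfold wt
  rw [Finset.prod_congr rfl (fun j hj => ?_), Finset.prod_const, Finset.card_range]
  rw [if_pos]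
  unfold ex
  rw [dif_pos (Finset.mem_range.mp hj)]

open Classical in
lemma Treal_step {p : ℝ} (hp : 0 < p) (hp' : p < 1) {k : ℕ} (hk : 0 < k) (m : ℕ) :
    Treal p k (m + 2 * k) ≤ Treal p k m * (1 - p ^ (2 * k)) := by
  classical
  unfold Treal
  rw [← Fintype.sum_bijective _ (glue_bijective m (2 * k)) _
    (fun t => if inside k (m + 2 * k) (ex (m + 2 * k) t)
      then wt p (m + 2 * k) (ex (m + 2 * k) t) else 0) (fun _ => rfl),
    Fintype.sum_prod_type]
  dsimp only
  have hle : ∀ (a : Fin m → Bool) (b : Fin (2 * k) → Bool),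
      (if inside k (m + 2 * k) (ex (m + 2 * k) (glue m (2 * k) a b))
        then wt p (m + 2 * k) (ex (m + 2 * k) (glue m (2 * k) a b)) else 0)
      ≤ (if inside k m (ex m a) then wt p m (ex m a) else 0) *
        (if ¬ ∀ i, b i = true then wt p (2 * k) (ex (2 * k) b) else 0) := by
    intro a b
    by_cases h : inside k (m + 2 * k) (ex (m + 2 * k) (glue m (2 * k) a b))
    · rw [if_pos h, if_pos (inside_glue_prefix h), if_pos (glue_not_all_true hk h),
        wt_glue]
    · rw [if_neg h]
      apply mul_nonneg <;> split <;>
        first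
          | exact wt_nonneg hp.le hp'.le _ _
          | exact le_refl 0
  calc ∑ a : Fin m → Bool, ∑ b : Fin (2 * k) → Bool,
        (if inside k (m + 2 * k) (ex (m + 2 * k) (glue m (2 * k) a b))
          then wt p (m + 2 * k) (ex (m + 2 * k) (glue m (2 * k) a b)) else 0)
      ≤ ∑ a : Fin m → Bool, ∑ b : Fin (2 * k) → Bool,
        (if inside k m (ex m a) then wt p m (ex m a) else 0) *
        (if ¬ ∀ i, b i = true then wt p (2 * k) (ex (2 * k) b) else 0) :=
        Finset.sum_le_sum fun a _ => Finset.sum_le_sum fun b _ => hle a b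
    _ = (∑ a : Fin m → Bool, if inside k m (ex m a) then wt p m (ex m a) else 0) *
        (∑ b : Fin (2 * k) → Bool,
          if ¬ ∀ i, b i = true then wt p (2 * k) (ex (2 * k) b) else 0) := by
        rw [← Finset.sum_mul_sum]
    _ = Treal p k m * (1 - p ^ (2 * k)) := by
        unfold Treal
        congr 1
        have hsplit : ∀ b : Fin (2 * k) → Bool,
            (if ¬ ∀ i, b i = true then wt p (2 * k) (ex (2 * k) b) else 0)
            = wt p (2 * k) (ex (2 * k) b)
              - (if b = (fun _ => true) then wt p (2 * k) (ex (2 * k) b) else 0) := by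
          intro b
          by_cases h : ∀ i, b i = true
          · rw [if_neg (by simpa using h), if_pos (funext h)]
            ring
          · rw [if_pos h, if_neg ?_]
            · ring
            · intro hb
              exact h fun i => by rw [hb]
        rw [Finset.sum_congr rfl fun b _ => hsplit b, Finset.sum_sub_distrib,
          sum_wt_ex_one, Finset.sum_ite_eq' Finset.univ (fun _ => true)
            (fun b => wt p (2 * k) (ex (2 * k) b)), if_pos (Finset.mem_univ _),
          wt_all_true]

open Classical in
lemma Treal_zero {p : ℝ} {k : ℕ} (hk : 0 < k) : Treal p k 0 = 1 := by
  unfold Treal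
  rw [Fintype.sum_unique]
  rw [if_pos, ]
  · simp [wt]
  · intro i hi
    interval_cases i
    unfold hits bw
    simp only [Finset.range_zero, Finset.sum_empty]
    push_neg
    constructor <;> omega

lemma Treal_le_pow {p : ℝ} (hp : 0 < p) (hp' : p < 1) {k : ℕ} (hk : 0 < k) (j : ℕ) :
    Treal p k (2 * k * j) ≤ (1 - p ^ (2 * k)) ^ j := by
  induction j with
  | zero =>
    simp [Treal_zero hk]
  | succ j ih =>
    have h1 : 2 * k * (j + 1) = 2 * k * j + 2 * k := by ring
    rw [h1, pow_succ]
    calc Treal p k (2 * k * j + 2 * k) ≤ Treal p k (2 * k * j) * (1 - p ^ (2 * k)) :=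
          Treal_step hp hp' hk _
      _ ≤ (1 - p ^ (2 * k)) ^ j * (1 - p ^ (2 * k)) := by
          apply mul_le_mul_of_nonneg_right ih
          have : p ^ (2 * k) ≤ 1 := pow_le_one₀ hp.le hp'.le
          linarith

end RWKey


section Meas

open RWKey

variable {Ω : Type*} [MeasurableSpace Ω] (P : Measure Ω) [IsProbabilityMeasure P]
  (X : ℕ → Ω → ℤ)

/-- the sign pattern of the steps -/
def sgnPat (X : ℕ → Ω → ℤ) (ω : Ω) : ℕ → Bool := fun j => decide (X j ω = 1)

/-- a cylinder event -/
def cylEvt (X : ℕ → Ω → ℤ) (m : ℕ) (s : ℕ → Bool) : Set Ω :=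
  ⋂ j ∈ Finset.range m, X j ⁻¹' {stp (s j)}

variable {p : ℝ}

lemma meas_step (hX : IsBiasedWalkSteps P X p) (j : ℕ) (b : Bool) :
    P (X j ⁻¹' {stp b}) = ENNReal.ofReal (if b then p else 1 - p) := by
  cases b
  · simpa [stp, Set.preimage] using hX.2.2.2 j
  · simpa [stp, Set.preimage] using hX.2.2.1 j

lemma meas_cylEvt (hX : IsBiasedWalkSteps P X p) (hp : 0 < p) (hp' : p < 1)
    (m : ℕ) (s : ℕ → Bool) :
    P (cylEvt X m s) = ENNReal.ofReal (wt p m s) := by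
  have := hX.2.1.measure_inter_preimage_eq_mul
    (sets := fun j => {stp (s j)}) (Finset.range m)
    (fun j _ => measurableSet_singleton _)
  rw [cylEvt, this]
  unfold wt
  rw [ENNReal.ofReal_prod_of_nonneg (fun j _ => by split <;> linarith)]
  exact Finset.prod_congr rfl fun j _ => meas_step P X hX j (s j)

/-- the set of "good" sample points where all steps are `±1` -/
def goodEvt (X : ℕ → Ω → ℤ) : Set Ω := {ω | ∀ j, X j ω = 1 ∨ X j ω = -1}

lemma meas_goodEvt_compl (hX : IsBiasedWalkSteps P X p) (hp : 0 < p) (hp' : p < 1) :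
    P (goodEvt X)ᶜ = 0 := by
  have hj : ∀ j : ℕ, P ({ω | X j ω = 1 ∨ X j ω = -1} : Set Ω)ᶜ = 0 := by
    intro j
    have hA : MeasurableSet (X j ⁻¹' {(1:ℤ)}) := (hX.1 j) (measurableSet_singleton _)
    have hB : MeasurableSet (X j ⁻¹' {(-1:ℤ)}) := (hX.1 j) (measurableSet_singleton _)
    have hd : Disjoint (X j ⁻¹' {(1:ℤ)}) (X j ⁻¹' {(-1:ℤ)}) := by
      rw [Set.disjoint_left]
      intro ω h1 h2
      simp only [Set.mem_preimage, Set.mem_singleton_iff] at h1 h2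
      omega
    have hU : ({ω | X j ω = 1 ∨ X j ω = -1} : Set Ω)
        = X j ⁻¹' {(1:ℤ)} ∪ X j ⁻¹' {(-1:ℤ)} := by
      ext ω
      simp [Set.mem_preimage]
    have hPU : P ({ω | X j ω = 1 ∨ X j ω = -1} : Set Ω) = 1 := by
      rw [hU, measure_union hd hB,
        show X j ⁻¹' {(1:ℤ)} = {ω | X j ω = 1} from rfl,
        show X j ⁻¹' {(-1:ℤ)} = {ω | X j ω = -1} from rfl,
        hX.2.2.1 j, hX.2.2.2 j, ← ENNReal.ofReal_add (by linarith) (by linarith)]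
      norm_num
    rw [measure_compl (by rw [hU]; exact hA.union hB) (measure_ne_top _ _), hPU,
      measure_univ, tsub_self]
  have hsub : (goodEvt X)ᶜ ⊆ ⋃ j, ({ω | X j ω = 1 ∨ X j ω = -1} : Set Ω)ᶜ := by
    intro ω hω
    simp only [goodEvt, Set.mem_compl_iff, Set.mem_setOf_eq, not_forall] at hω
    obtain ⟨j, hj'⟩ := hω
    exact Set.mem_iUnion.mpr ⟨j, hj'⟩
  exact measure_mono_null hsub (measure_iUnion_null fun j => hj j)

lemma measure_eq_of_inter_good (hX : IsBiasedWalkSteps P X p) (hp : 0 < p) (hp' : p < 1)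
    {S T : Set Ω} (h : S ∩ goodEvt X = T ∩ goodEvt X) : P S = P T := by
  have key : ∀ U V : Set Ω, U ∩ goodEvt X = V ∩ goodEvt X → P U ≤ P V := by
    intro U V hUV
    calc P U ≤ P ((U ∩ goodEvt X) ∪ (goodEvt X)ᶜ) := by
          apply measure_mono
          intro ω hω
          by_cases hg : ω ∈ goodEvt X
          · exact Or.inl ⟨hω, hg⟩
          · exact Or.inr hg
      _ ≤ P (U ∩ goodEvt X) + P (goodEvt X)ᶜ := measure_union_le _ _
      _ = P (V ∩ goodEvt X) := by
          rw [meas_goodEvt_compl P X hX hp hp', add_zero, hUV]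
      _ ≤ P V := measure_mono Set.inter_subset_left
  exact le_antisymm (key S T h) (key T S h.symm)

open Classical in
lemma measure_decompose (hX : IsBiasedWalkSteps P X p) (hp : 0 < p) (hp' : p < 1)
    (m : ℕ) (R : Set Ω) (Q : (ℕ → Bool) → Prop)
    (hQ : ∀ s t : ℕ → Bool, (∀ j < m, s j = t j) → Q s → Q t)
    (hR : ∀ ω ∈ goodEvt X, (ω ∈ R ↔ Q (sgnPat X ω))) :
    P R = ∑ s ∈ Finset.univ.filter (fun s : Fin m → Bool => Q (ex m s)),
      ENNReal.ofReal (wt p m (ex m s)) := by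
  have hstp_good : ∀ ω ∈ goodEvt X, ∀ j, X j ω = stp (sgnPat X ω j) := by
    intro ω hω j
    rcases hω j with h | h <;> simp [sgnPat, h, stp]
  have hinter : R ∩ goodEvt X =
      (⋃ s ∈ Finset.univ.filter (fun s : Fin m → Bool => Q (ex m s)),
        cylEvt X m (ex m s)) ∩ goodEvt X := by
    ext ω
    simp only [Set.mem_inter_iff, Set.mem_iUnion, Finset.mem_filter, Finset.mem_univ,
      true_and, and_congr_left_iff]
    intro hg
    constructor
    · intro hω
      refine ⟨fun i => sgnPat X ω (i : ℕ), ?_, ?_⟩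
      · refine hQ (sgnPat X ω) _ (fun j hj => ?_) ((hR ω hg).mp hω)
        unfold ex
        rw [dif_pos hj]
      · unfold cylEvt
        simp only [Set.mem_iInter, Set.mem_preimage, Set.mem_singleton_iff,
          Finset.mem_range]
        intro j hj
        rw [show ex m (fun i : Fin m => sgnPat X ω (i : ℕ)) j = sgnPat X ω j by
          unfold ex; rw [dif_pos hj]]
        exact hstp_good ω hg j
    · rintro ⟨s, hQs, hcyl⟩
      unfold cylEvt at hcyl
      simp only [Set.mem_iInter, Set.mem_preimage, Set.mem_singleton_iff,
        Finset.mem_range] at hcyl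
      refine (hR ω hg).mpr (hQ (ex m s) _ (fun j hj => ?_) hQs)
      have := hcyl j hj
      unfold sgnPat
      rw [this]
      cases ex m s j <;> simp [stp]
  rw [measure_eq_of_inter_good P X hX hp hp' hinter]
  have hmeas : ∀ s : Fin m → Bool, MeasurableSet (cylEvt X m (ex m s)) := by
    intro s
    exact MeasurableSet.biInter (Set.to_countable _)
      (fun j _ => (hX.1 j) (measurableSet_singleton _))
  have hdisj : Set.PairwiseDisjoint
      ↑(Finset.univ.filter (fun s : Fin m → Bool => Q (ex m s)))
      (fun s : Fin m → Bool => cylEvt X m (ex m s)) := by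
    intro s _ t _ hst
    rw [Function.onFun, Set.disjoint_left]
    intro ω hs ht
    apply hst
    funext i
    unfold cylEvt at hs ht
    simp only [Set.mem_iInter, Set.mem_preimage, Set.mem_singleton_iff,
      Finset.mem_range] at hs ht
    have h1 := hs (i : ℕ) i.isLt
    have h2 := ht (i : ℕ) i.isLt
    rw [h1] at h2
    have : ex m s (i : ℕ) = ex m t (i : ℕ) := by
      rcases Bool.dichotomy (ex m s (i : ℕ)) with h | h <;>
        rcases Bool.dichotomy (ex m t (i : ℕ)) with h' | h' <;>
        simp [h, h', stp] at h2 ⊢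
    unfold ex at this
    rw [dif_pos i.isLt, dif_pos i.isLt] at this
    simpa using this
  rw [measure_biUnion_finset hdisj (fun s _ => hmeas s)]
  exact Finset.sum_congr rfl fun s _ => meas_cylEvt P X hX hp hp' m (ex m s)

end Meas

section ExitTime

open RWKey

variable {Ω : Type*} (X : ℕ → Ω → ℤ) (k : ℕ)

/-- the walk hits `±k` at time `i` -/
def wHit (X : ℕ → Ω → ℤ) (k : ℕ) (ω : Ω) (i : ℕ) : Prop :=
  walk X i ω = (k : ℤ) ∨ walk X i ω = -(k : ℤ)

lemma exitTime_spec {ω : Ω} (h : ∃ i : ℕ, wHit X k ω i) :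
    ∃ m0 : ℕ, exitTime X k ω = (m0 : ℕ∞) ∧ wHit X k ω m0 ∧
      ∀ i, wHit X k ω i → m0 ≤ i := by
  classical
  set A := {i : ℕ | wHit X k ω i} with hA
  refine ⟨sInf A, ?_, Nat.sInf_mem h, fun i hi => Nat.sInf_le hi⟩
  unfold exitTime
  apply le_antisymm
  · exact sInf_le ⟨sInf A, rfl, Nat.sInf_mem h⟩
  · apply le_sInf
    rintro t ⟨i, rfl, hi⟩
    exact_mod_cast Nat.sInf_le hi

lemma exitTime_eq_top_iff (ω : Ω) :
    exitTime X k ω = ⊤ ↔ ∀ i : ℕ, ¬ wHit X k ω i := by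
  constructor
  · intro h i hi
    rcases exitTime_spec X k ⟨i, hi⟩ with ⟨m0, hm0, _, _⟩
    rw [hm0] at h
    exact (ENat.coe_ne_top m0) h
  · intro h
    unfold exitTime
    rw [sInf_eq_top]
    rintro t ⟨i, rfl, hi⟩
    exact absurd hi (h i)

lemma exitTime_gt_iff (n : ℕ) (ω : Ω) :
    (n : ℕ∞) < exitTime X k ω ↔ ∀ i ≤ n, ¬ wHit X k ω i := by
  constructor
  · intro h i hi hhit
    rcases exitTime_spec X k ⟨i, hhit⟩ with ⟨m0, hm0, _, hmin⟩
    rw [hm0] at h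
    have : m0 ≤ i := hmin i hhit
    have : (n : ℕ∞) < (i : ℕ∞) := lt_of_lt_of_le h (by exact_mod_cast this)
    rw [Nat.cast_lt] at this
    omega
  · intro h
    by_cases hex : ∃ i : ℕ, wHit X k ω i
    · rcases exitTime_spec X k hex with ⟨m0, hm0, hhit, _⟩
      rw [hm0, Nat.cast_lt]
      by_contra hle
      exact h m0 (by omega) hhit
    · rw [(exitTime_eq_top_iff X k ω).mpr (by push_neg at hex; exact hex)]
      exact Ne.lt_top (ENat.coe_ne_top n)

lemma exitTime_eq_iff (m : ℕ) (ω : Ω) :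
    exitTime X k ω = (m : ℕ∞) ↔ (∀ i < m, ¬ wHit X k ω i) ∧ wHit X k ω m := by
  constructor
  · intro h
    by_cases hex : ∃ i : ℕ, wHit X k ω i
    · rcases exitTime_spec X k hex with ⟨m0, hm0, hhit, hmin⟩
      rw [hm0, Nat.cast_inj] at h
      subst h
      exact ⟨fun i hi hh => by have := hmin i hh; omega, hhit⟩
    · rw [(exitTime_eq_top_iff X k ω).mpr (by push_neg at hex; exact hex)] at h
      exact absurd h.symm (ENat.coe_ne_top m)
  · rintro ⟨hmin, hhit⟩
    rcases exitTime_spec X k ⟨m, hhit⟩ with ⟨m0, hm0, hhit0, hmin0⟩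
    have h1 : m0 ≤ m := hmin0 m hhit
    have h2 : ¬ m0 < m := fun hlt => hmin m0 hlt hhit0
    have : m0 = m := by omega
    rw [hm0, this]

lemma walk_eq_bw {ω : Ω} (hg : ω ∈ goodEvt X) (i : ℕ) :
    walk X i ω = bw (sgnPat X ω) i := by
  unfold walk bw
  refine Finset.sum_congr rfl fun j _ => ?_
  rcases hg j with h | h <;> simp [sgnPat, h, stp]

lemma wHit_iff_hits {ω : Ω} (hg : ω ∈ goodEvt X) (i : ℕ) :
    wHit X k ω i ↔ hits k (sgnPat X ω) i := by
  unfold wHit hits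
  rw [walk_eq_bw X hg i]

variable [MeasurableSpace Ω] (P : Measure Ω) [IsProbabilityMeasure P]

lemma measurable_walk (hm : ∀ i, Measurable (X i)) (i : ℕ) :
    Measurable (fun ω => walk X i ω) := by
  unfold walk
  exact Finset.measurable_sum _ fun j _ => hm j

lemma measurableSet_hit (hm : ∀ i, Measurable (X i)) (i : ℕ) :
    MeasurableSet {ω | wHit X k ω i} := by
  have : {ω | wHit X k ω i} = (fun ω => walk X i ω) ⁻¹' {(k : ℤ)}
      ∪ (fun ω => walk X i ω) ⁻¹' {-(k : ℤ)} := by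
    ext ω; simp [wHit]
  rw [this]
  exact ((measurable_walk X hm i) (measurableSet_singleton _)).union
    ((measurable_walk X hm i) (measurableSet_singleton _))

lemma measurableSet_exit_gt (hm : ∀ i, Measurable (X i)) (n : ℕ) :
    MeasurableSet {ω | (n : ℕ∞) < exitTime X k ω} := by
  have : {ω | (n : ℕ∞) < exitTime X k ω} = ⋂ i ∈ Finset.range (n + 1),
      {ω | wHit X k ω i}ᶜ := by
    ext ω
    simp only [Set.mem_setOf_eq, Set.mem_iInter, Set.mem_compl_iff, Finset.mem_range]
    rw [exitTime_gt_iff]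
    exact ⟨fun h i hi => h i (by omega), fun h i hi => h i (by omega)⟩
  rw [this]
  exact MeasurableSet.biInter (Set.to_countable _)
    (fun i _ => (measurableSet_hit X k hm i).compl)

lemma measurableSet_exit_eq (hm : ∀ i, Measurable (X i)) (m : ℕ) :
    MeasurableSet {ω | exitTime X k ω = (m : ℕ∞)} := by
  have : {ω | exitTime X k ω = (m : ℕ∞)} =
      (⋂ i ∈ Finset.range m, {ω | wHit X k ω i}ᶜ) ∩ {ω | wHit X k ω m} := by
    ext ω
    simp only [Set.mem_setOf_eq, Set.mem_inter_iff, Set.mem_iInter, Set.mem_compl_iff,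
      Finset.mem_range]
    rw [exitTime_eq_iff]
  rw [this]
  exact (MeasurableSet.biInter (Set.to_countable _)
    (fun i _ => (measurableSet_hit X k hm i).compl)).inter (measurableSet_hit X k hm m)

lemma measurableSet_exit_top (hm : ∀ i, Measurable (X i)) :
    MeasurableSet {ω | exitTime X k ω = ⊤} := by
  have : {ω | exitTime X k ω = ⊤} = ⋂ i : ℕ, {ω | wHit X k ω i}ᶜ := by
    ext ω
    simp only [Set.mem_setOf_eq, Set.mem_iInter, Set.mem_compl_iff]
    rw [exitTime_eq_top_iff]
  rw [this]
  exact MeasurableSet.iInter (fun i => (measurableSet_hit X k hm i).compl)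

variable {p : ℝ}

lemma meas_exit_gt (hX : IsBiasedWalkSteps P X p) (hp : 0 < p) (hp' : p < 1) (n : ℕ) :
    (P {ω | (n : ℕ∞) < exitTime X k ω}).toReal = Treal p k n := by
  classical
  have hdec := measure_decompose P X hX hp hp' n {ω | (n : ℕ∞) < exitTime X k ω}
    (fun s => inside k n s)
    (fun s t hst hQ => (inside_congr hst).mp hQ)
    (fun ω hg => by
      rw [Set.mem_setOf_eq, exitTime_gt_iff]
      unfold inside
      exact forall₂_congr fun i hi => not_congr (wHit_iff_hits X k hg i))
  rw [hdec, ← ENNReal.ofReal_sum_of_nonneg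
    (fun s _ => wt_nonneg hp.le hp'.le n (ex n s)),
    ENNReal.toReal_ofReal (Finset.sum_nonneg
      (fun s _ => wt_nonneg hp.le hp'.le n (ex n s)))]
  unfold Treal
  rw [Finset.sum_filter]

lemma meas_exit_eq (hX : IsBiasedWalkSteps P X p) (hp : 0 < p) (hp' : p < 1) (m : ℕ) :
    (P {ω | exitTime X k ω = (m : ℕ∞)}).toReal = Ereal p k m := by
  classical
  have hdec := measure_decompose P X hX hp hp' m {ω | exitTime X k ω = (m : ℕ∞)}
    (fun s => exitsAt k m s)
    (fun s t hst hQ => (exitsAt_congr hst).mp hQ)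
    (fun ω hg => by
      rw [Set.mem_setOf_eq, exitTime_eq_iff]
      unfold exitsAt
      exact and_congr (forall₂_congr fun i hi => not_congr (wHit_iff_hits X k hg i))
        (wHit_iff_hits X k hg m))
  rw [hdec, ← ENNReal.ofReal_sum_of_nonneg
    (fun s _ => wt_nonneg hp.le hp'.le m (ex m s)),
    ENNReal.toReal_ofReal (Finset.sum_nonneg
      (fun s _ => wt_nonneg hp.le hp'.le m (ex m s)))]
  unfold Ereal
  rw [Finset.sum_filter]

end ExitTime

section Tail

open RWKey

lemma enat_exists_coe {x : ℕ∞} (hx : x ≠ ⊤) : ∃ m : ℕ, x = (m : ℕ∞) := by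
  lift x to ℕ using hx
  exact ⟨x, rfl⟩

variable {Ω : Type*} [MeasurableSpace Ω] (P : Measure Ω) [IsProbabilityMeasure P]
  (X : ℕ → Ω → ℤ) (k : ℕ) {p : ℝ}

lemma meas_exit_top_zero (hX : IsBiasedWalkSteps P X p) (hp : 0 < p) (hp' : p < 1)
    (hk : 0 < k) : P {ω | exitTime X k ω = ⊤} = 0 := by
  have hple : p ^ (2 * k) ≤ 1 := pow_le_one₀ hp.le hp'.le
  have hppos : 0 < p ^ (2 * k) := pow_pos hp _
  have hb : ∀ j : ℕ, (P {ω | exitTime X k ω = ⊤}).toReal ≤ (1 - p ^ (2 * k)) ^ j := by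
    intro j
    have hsub : {ω | exitTime X k ω = ⊤}
        ⊆ {ω | ((2 * k * j : ℕ) : ℕ∞) < exitTime X k ω} := by
      intro ω hω
      rw [Set.mem_setOf_eq] at hω ⊢
      rw [hω]
      exact Ne.lt_top (ENat.coe_ne_top _)
    calc (P {ω | exitTime X k ω = ⊤}).toReal
        ≤ (P {ω | ((2 * k * j : ℕ) : ℕ∞) < exitTime X k ω}).toReal :=
          ENNReal.toReal_mono (measure_ne_top _ _) (measure_mono hsub)
      _ = Treal p k (2 * k * j) := meas_exit_gt X k P hX hp hp' (2 * k * j)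
      _ ≤ (1 - p ^ (2 * k)) ^ j := Treal_le_pow hp hp' hk j
  have hlim : Filter.Tendsto (fun j : ℕ => (1 - p ^ (2 * k)) ^ j) Filter.atTop
      (nhds 0) := tendsto_pow_atTop_nhds_zero_of_lt_one (by linarith) (by linarith)
  have h0 : (P {ω | exitTime X k ω = ⊤}).toReal ≤ 0 := ge_of_tendsto' hlim hb
  have := le_antisymm h0 ENNReal.toReal_nonneg
  rcases (ENNReal.toReal_eq_zero_iff _).mp this with h | h
  · exact h
  · exact absurd h (measure_ne_top _ _)

lemma exit_gt_mem_iff (n : ℕ) (ω : Ω) :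
    (n : ℕ∞) < exitTime X k ω ↔ exitTime X k ω = ⊤ ∨
      ∃ j : ℕ, exitTime X k ω = ((n + 1 + j : ℕ) : ℕ∞) := by
  constructor
  · intro h
    rcases eq_or_ne (exitTime X k ω) ⊤ with ht | ht
    · exact Or.inl ht
    · obtain ⟨m, hm⟩ := enat_exists_coe ht
      rw [hm] at h ⊢
      rw [Nat.cast_lt] at h
      exact Or.inr ⟨m - n - 1, by congr 1; omega⟩
  · rintro (h | ⟨j, h⟩) <;> rw [h]
    · exact Ne.lt_top (ENat.coe_ne_top n)
    · rw [Nat.cast_lt]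
      omega

lemma exit_gt_union (n : ℕ) :
    {ω | (n : ℕ∞) < exitTime X k ω} = {ω | exitTime X k ω = ⊤} ∪
      ⋃ j : ℕ, {ω | exitTime X k ω = ((n + 1 + j : ℕ) : ℕ∞)} := by
  ext ω
  simp only [Set.mem_setOf_eq, Set.mem_union, Set.mem_iUnion]
  exact exit_gt_mem_iff X k n ω

lemma exit_univ_union :
    (Set.univ : Set Ω) = {ω | exitTime X k ω = ⊤} ∪
      ⋃ m : ℕ, {ω | exitTime X k ω = (m : ℕ∞)} := by
  ext ω
  simp only [Set.mem_univ, Set.mem_union, Set.mem_iUnion, Set.mem_setOf_eq, true_iff]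
  rcases eq_or_ne (exitTime X k ω) ⊤ with ht | ht
  · exact Or.inl ht
  · obtain ⟨m, hm⟩ := enat_exists_coe ht
    exact Or.inr ⟨m, hm⟩

lemma exit_eq_disjoint (g : ℕ → ℕ) (hg : Function.Injective g) :
    Pairwise (Function.onFun Disjoint
      (fun j : ℕ => {ω | exitTime X k ω = ((g j : ℕ) : ℕ∞)})) := by
  intro a b hab
  rw [Function.onFun, Set.disjoint_left]
  intro ω h1 h2
  rw [Set.mem_setOf_eq] at h1 h2
  rw [h1] at h2
  exact hab (hg (Nat.cast_inj.mp h2))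

lemma exit_eq_disjoint' :
    Pairwise (Function.onFun Disjoint
      (fun m : ℕ => {ω | exitTime X k ω = (m : ℕ∞)})) := by
  intro a b hab
  rw [Function.onFun, Set.disjoint_left]
  intro ω h1 h2
  rw [Set.mem_setOf_eq] at h1 h2
  rw [h1] at h2
  exact hab (Nat.cast_inj.mp h2)

lemma meas_gt_tsum (hX : IsBiasedWalkSteps P X p) (hp : 0 < p) (hp' : p < 1)
    (hk : 0 < k) (n : ℕ) :
    P {ω | (n : ℕ∞) < exitTime X k ω}
      = ∑' j : ℕ, P {ω | exitTime X k ω = ((n + 1 + j : ℕ) : ℕ∞)} := by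
  have h1 : P {ω | (n : ℕ∞) < exitTime X k ω}
      = P (⋃ j : ℕ, {ω | exitTime X k ω = ((n + 1 + j : ℕ) : ℕ∞)}) := by
    rw [exit_gt_union X k n]
    apply le_antisymm
    · refine le_trans (measure_union_le _ _) ?_
      rw [meas_exit_top_zero P X k hX hp hp' hk, zero_add]
    · exact measure_mono Set.subset_union_right
  rw [h1, measure_iUnion (exit_eq_disjoint X k (fun j => n + 1 + j)
    (fun a b hab => Nat.add_left_cancel hab)) (fun j => measurableSet_exit_eq X k hX.1 _)]

lemma meas_univ_tsum (hX : IsBiasedWalkSteps P X p) (hp : 0 < p) (hp' : p < 1)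
    (hk : 0 < k) :
    (1 : ENNReal) = ∑' m : ℕ, P {ω | exitTime X k ω = (m : ℕ∞)} := by
  have h1 : (1 : ENNReal) = P (Set.univ : Set Ω) := (measure_univ).symm
  rw [h1, exit_univ_union X k]
  have h2 : P ({ω | exitTime X k ω = ⊤} ∪ ⋃ m : ℕ, {ω | exitTime X k ω = (m : ℕ∞)})
      = P (⋃ m : ℕ, {ω | exitTime X k ω = (m : ℕ∞)}) := by
    apply le_antisymm
    · refine le_trans (measure_union_le _ _) ?_
      rw [meas_exit_top_zero P X k hX hp hp' hk, zero_add]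
    · exact measure_mono Set.subset_union_right
  rw [h2, measure_iUnion (exit_eq_disjoint' X k)
    (fun m => measurableSet_exit_eq X k hX.1 m)]

variable {r : ℝ}

lemma measurable_exit_toNat (hm : ∀ i, Measurable (X i)) :
    Measurable (fun ω => (exitTime X k ω).toNat) := by
  apply measurable_to_countable'
  intro j
  rcases Nat.eq_zero_or_pos j with rfl | hj
  · have he : (fun ω => (exitTime X k ω).toNat) ⁻¹' {0}
        = {ω | exitTime X k ω = ⊤} ∪ {ω | exitTime X k ω = ((0 : ℕ) : ℕ∞)} := by
      ext ω
      simp only [Set.mem_preimage, Set.mem_singleton_iff, Set.mem_union, Set.mem_setOf_eq]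
      constructor
      · intro h
        rcases eq_or_ne (exitTime X k ω) ⊤ with ht | ht
        · exact Or.inl ht
        · obtain ⟨m, hm'⟩ := enat_exists_coe ht
          right
          rw [hm'] at h ⊢
          rw [ENat.toNat_coe] at h
          rw [h]
      · rintro (h | h) <;> rw [h] <;> simp
    rw [he]
    exact (measurableSet_exit_top X k hm).union (measurableSet_exit_eq X k hm 0)
  · have he : (fun ω => (exitTime X k ω).toNat) ⁻¹' {j}
        = {ω | exitTime X k ω = (j : ℕ∞)} := by
      ext ω
      simp only [Set.mem_preimage, Set.mem_singleton_iff, Set.mem_setOf_eq]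
      constructor
      · intro h
        rcases eq_or_ne (exitTime X k ω) ⊤ with ht | ht
        · rw [ht] at h
          simp at h
          omega
        · obtain ⟨m, hm'⟩ := enat_exists_coe ht
          rw [hm'] at h ⊢
          rw [ENat.toNat_coe] at h
          rw [h]
      · intro h
        rw [h, ENat.toNat_coe]
    rw [he]
    exact measurableSet_exit_eq X k hm j

lemma measurable_rpow_exit (hm : ∀ i, Measurable (X i)) :
    Measurable (fun ω => r ^ (exitTime X k ω).toNat) :=
  (measurable_from_nat (f := fun t : ℕ => r ^ t)).comp (measurable_exit_toNat X k hm)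

lemma integrable_rpow_exit (hm : ∀ i, Measurable (X i)) (hr0 : 0 < r) (hr1 : r ≤ 1) :
    Integrable (fun ω => r ^ (exitTime X k ω).toNat) P := by
  refine (integrable_const (1 : ℝ)).mono'
    (measurable_rpow_exit X k hm).aestronglyMeasurable (Filter.Eventually.of_forall ?_)
  intro ω
  rw [Real.norm_eq_abs, abs_of_nonneg (pow_nonneg hr0.le _)]
  exact pow_le_one₀ hr0.le hr1

lemma setIntegral_rpow_eq (hm : ∀ i, Measurable (X i)) (m : ℕ) :
    ∫ ω in {ω | exitTime X k ω = (m : ℕ∞)}, r ^ (exitTime X k ω).toNat ∂P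
      = r ^ m * (P {ω | exitTime X k ω = (m : ℕ∞)}).toReal := by
  rw [setIntegral_congr_fun (measurableSet_exit_eq X k hm m)
    (g := fun _ => r ^ m) (fun ω hω => by
      rw [Set.mem_setOf_eq] at hω
      rw [hω, ENat.toNat_coe]),
    setIntegral_const, smul_eq_mul, mul_comm, Measure.real]

lemma integral_gt_rpow (hX : IsBiasedWalkSteps P X p) (hp : 0 < p) (hp' : p < 1)
    (hk : 0 < k) (hr0 : 0 < r) (hr1 : r ≤ 1) (n : ℕ) :
    ∫ ω in {ω | (n : ℕ∞) < exitTime X k ω}, r ^ (exitTime X k ω).toNat ∂P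
      = ∑' j : ℕ, r ^ (n + 1 + j) *
          (P {ω | exitTime X k ω = ((n + 1 + j : ℕ) : ℕ∞)}).toReal := by
  have hae : {ω | (n : ℕ∞) < exitTime X k ω}
      =ᵐ[P] ⋃ j : ℕ, {ω | exitTime X k ω = ((n + 1 + j : ℕ) : ℕ∞)} := by
    rw [MeasureTheory.ae_eq_set]
    constructor
    · refine measure_mono_null ?_ (meas_exit_top_zero P X k hX hp hp' hk)
      intro ω hω
      rcases hω with ⟨h1, h2⟩
      rw [Set.mem_setOf_eq] at h1 ⊢
      rcases (exit_gt_mem_iff X k n ω).mp h1 with h | ⟨j, h⟩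
      · exact h
      · exact absurd (Set.mem_iUnion.mpr ⟨j, h⟩) h2
    · have : (⋃ j : ℕ, {ω | exitTime X k ω = ((n + 1 + j : ℕ) : ℕ∞)})
          \ {ω | (n : ℕ∞) < exitTime X k ω} = ∅ := by
        rw [Set.diff_eq_empty]
        intro ω hω
        obtain ⟨j, hj⟩ := Set.mem_iUnion.mp hω
        rw [Set.mem_setOf_eq] at hj ⊢
        exact (exit_gt_mem_iff X k n ω).mpr (Or.inr ⟨j, hj⟩)
      rw [this]
      exact measure_empty
  rw [setIntegral_congr_set hae,
    integral_iUnion (fun j => measurableSet_exit_eq X k hX.1 _)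
      (exit_eq_disjoint X k (fun j => n + 1 + j) (fun a b hab => Nat.add_left_cancel hab))
      (integrable_rpow_exit P X k hX.1 hr0 hr1).integrableOn]
  exact tsum_congr fun j => setIntegral_rpow_eq P X k hX.1 (n + 1 + j)

lemma integral_all_rpow (hX : IsBiasedWalkSteps P X p) (hp : 0 < p) (hp' : p < 1)
    (hk : 0 < k) (hr0 : 0 < r) (hr1 : r ≤ 1) :
    ∫ ω, r ^ (exitTime X k ω).toNat ∂P
      = ∑' m : ℕ, r ^ m * (P {ω | exitTime X k ω = (m : ℕ∞)}).toReal := by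
  have hae : (Set.univ : Set Ω)
      =ᵐ[P] ⋃ m : ℕ, {ω | exitTime X k ω = (m : ℕ∞)} := by
    rw [MeasureTheory.ae_eq_set]
    constructor
    · refine measure_mono_null ?_ (meas_exit_top_zero P X k hX hp hp' hk)
      intro ω hω
      rcases hω with ⟨-, h2⟩
      rw [Set.mem_setOf_eq]
      rcases eq_or_ne (exitTime X k ω) ⊤ with ht | ht
      · exact ht
      · obtain ⟨m, hm'⟩ := enat_exists_coe ht
        exact absurd (Set.mem_iUnion.mpr ⟨m, hm'⟩) h2
    · rw [Set.diff_eq_empty.mpr (Set.subset_univ _)]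
      exact measure_empty
  rw [← MeasureTheory.setIntegral_univ, setIntegral_congr_set hae,
    integral_iUnion (fun m => measurableSet_exit_eq X k hX.1 m)
      (exit_eq_disjoint' X k)
      (integrable_rpow_exit P X k hX.1 hr0 hr1).integrableOn]
  exact tsum_congr fun m => setIntegral_rpow_eq P X k hX.1 m

end Tail

/-- Key exchange identity in the random walk proof: for
`1/2 ≤ p₁ < p₂ < 1`, `r = √(p₂q₂/(p₁q₁))` and every `n`,
`ℚ_{p₂}(σ > n) = 𝔼_{p₁}[r^σ 1_{σ > n}] / 𝔼_{p₁}[r^σ]`. -/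
theorem rw_key_exchange_identity
    {Ω₁ Ω₂ : Type*} [MeasurableSpace Ω₁] [MeasurableSpace Ω₂]
    (P₁ : Measure Ω₁) (P₂ : Measure Ω₂)
    [IsProbabilityMeasure P₁] [IsProbabilityMeasure P₂]
    {p₁ p₂ : ℝ} (h₁ : 1 / 2 ≤ p₁) (h₁₂ : p₁ < p₂) (h₂ : p₂ < 1)
    (X₁ : ℕ → Ω₁ → ℤ) (X₂ : ℕ → Ω₂ → ℤ)
    (hX₁ : IsBiasedWalkSteps P₁ X₁ p₁) (hX₂ : IsBiasedWalkSteps P₂ X₂ p₂)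
    (k : ℕ) (hk : 0 < k) (n : ℕ) :
    (P₂ {ω | (n : ℕ∞) < exitTime X₂ k ω}).toReal =
      (∫ ω in {ω | (n : ℕ∞) < exitTime X₁ k ω},
          Real.sqrt ((p₂ * (1 - p₂)) / (p₁ * (1 - p₁))) ^ (exitTime X₁ k ω).toNat ∂P₁) /
        ∫ ω, Real.sqrt ((p₂ * (1 - p₂)) / (p₁ * (1 - p₁))) ^ (exitTime X₁ k ω).toNat ∂P₁ := by
  have hp1 : 0 < p₁ := by linarith
  have hp1' : p₁ < 1 := by linarith
  have hp2 : 0 < p₂ := by linarith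
  have hp2' : p₂ < 1 := h₂
  have hrr : Real.sqrt ((p₂ * (1 - p₂)) / (p₁ * (1 - p₁))) = RWKey.rr p₁ p₂ := rfl
  rw [hrr]
  have hr0 : 0 < RWKey.rr p₁ p₂ := RWKey.rr_pos hp1 hp1' hp2 hp2'
  have hr1 : RWKey.rr p₁ p₂ ≤ 1 := by
    unfold RWKey.rr
    calc Real.sqrt ((p₂ * (1 - p₂)) / (p₁ * (1 - p₁))) ≤ Real.sqrt 1 :=
          Real.sqrt_le_sqrt (by
            rw [div_le_one (mul_pos hp1 (by linarith))]
            nlinarith)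
      _ = 1 := Real.sqrt_one
  have hEr : ∀ m : ℕ, (P₂ {ω | exitTime X₂ k ω = (m : ℕ∞)}).toReal
      = RWKey.CC p₁ p₂ k *
        (RWKey.rr p₁ p₂ ^ m * (P₁ {ω | exitTime X₁ k ω = (m : ℕ∞)}).toReal) := by
    intro m
    rw [meas_exit_eq X₂ k P₂ hX₂ hp2 hp2' m, meas_exit_eq X₁ k P₁ hX₁ hp1 hp1' m]
    exact RWKey.Ereal_exchange hp1 hp1' hp2 hp2' k hk m
  have hP2gt : (P₂ {ω | (n : ℕ∞) < exitTime X₂ k ω}).toReal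
      = ∑' j : ℕ, (P₂ {ω | exitTime X₂ k ω = ((n + 1 + j : ℕ) : ℕ∞)}).toReal := by
    rw [meas_gt_tsum P₂ X₂ k hX₂ hp2 hp2' hk n,
      ENNReal.tsum_toReal_eq (fun j => measure_ne_top _ _)]
  have hP2one : (1 : ℝ)
      = ∑' m : ℕ, (P₂ {ω | exitTime X₂ k ω = ((m : ℕ) : ℕ∞)}).toReal := by
    have h := meas_univ_tsum P₂ X₂ k hX₂ hp2 hp2' hk
    have := congrArg ENNReal.toReal h
    rw [ENNReal.toReal_one, ENNReal.tsum_toReal_eq (fun m => measure_ne_top _ _)] at this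
    exact this
  have hN := integral_gt_rpow P₁ X₁ k hX₁ hp1 hp1' hk hr0 hr1 n
  have hD := integral_all_rpow P₁ X₁ k hX₁ hp1 hp1' hk hr0 hr1
  set D := ∫ ω, RWKey.rr p₁ p₂ ^ (exitTime X₁ k ω).toNat ∂P₁ with hDdef
  set N := ∫ ω in {ω | (n : ℕ∞) < exitTime X₁ k ω},
      RWKey.rr p₁ p₂ ^ (exitTime X₁ k ω).toNat ∂P₁ with hNdef
  have hCD : RWKey.CC p₁ p₂ k * D = 1 := by
    calc RWKey.CC p₁ p₂ k * D
        = RWKey.CC p₁ p₂ k * ∑' m : ℕ, RWKey.rr p₁ p₂ ^ m *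
            (P₁ {ω | exitTime X₁ k ω = ((m : ℕ) : ℕ∞)}).toReal := by rw [← hD]
      _ = ∑' m : ℕ, RWKey.CC p₁ p₂ k * (RWKey.rr p₁ p₂ ^ m *
            (P₁ {ω | exitTime X₁ k ω = ((m : ℕ) : ℕ∞)}).toReal) := tsum_mul_left.symm
      _ = ∑' m : ℕ, (P₂ {ω | exitTime X₂ k ω = ((m : ℕ) : ℕ∞)}).toReal :=
          tsum_congr fun m => (hEr m).symm
      _ = 1 := hP2one.symm
  have hD0 : D ≠ 0 := by
    intro h
    rw [h, mul_zero] at hCD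
    norm_num at hCD
  have hgoal : (P₂ {ω | (n : ℕ∞) < exitTime X₂ k ω}).toReal
      = RWKey.CC p₁ p₂ k * N := by
    calc (P₂ {ω | (n : ℕ∞) < exitTime X₂ k ω}).toReal
        = ∑' j : ℕ, (P₂ {ω | exitTime X₂ k ω = ((n + 1 + j : ℕ) : ℕ∞)}).toReal := hP2gt
      _ = ∑' j : ℕ, RWKey.CC p₁ p₂ k * (RWKey.rr p₁ p₂ ^ (n + 1 + j) *
            (P₁ {ω | exitTime X₁ k ω = ((n + 1 + j : ℕ) : ℕ∞)}).toReal) :=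
          tsum_congr fun j => hEr (n + 1 + j)
      _ = RWKey.CC p₁ p₂ k * ∑' j : ℕ, RWKey.rr p₁ p₂ ^ (n + 1 + j) *
            (P₁ {ω | exitTime X₁ k ω = ((n + 1 + j : ℕ) : ℕ∞)}).toReal := tsum_mul_left
      _ = RWKey.CC p₁ p₂ k * N := by rw [← hN]
  rw [hgoal]
  have hCinv : RWKey.CC p₁ p₂ k = 1 / D := by
    rw [eq_div_iff hD0]
    exact hCD
  rw [hCinv]
  field_simp
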